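/- In the setting of the base extension of groups, the composite Σ → G ⋉ Σ → Γ = (G ⋉ Σ)/Ξ of the inclusion φ ↦ (1, φ) with the quotient map induces a bijection between the set F\Σ of right cosets of F in Σ and the set G\Γ of right cosets of (the image of) G in Γ. -/

import Mathlib

/-- A right action of `G` on `S` by group automorphisms, i.e. an
anti-homomorphism `G → Aut S`; we write `act φ g` for `φ^g`. -/
structure RightAutAction (S G : Type*) [Group S] [Group G] where
  act : S → G → S
  act_mul : ∀ φ ψ g, act (φ * ψ) g = act φ g * act ψ g
  act_one : ∀ φ, act φ 1 = φ
  act_act : ∀ φ g g', act (act φ g) g' = act φ (g * g')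

theorem RightAutAction.act_one_left {S G : Type*} [Group S] [Group G]
    (α : RightAutAction S G) (g : G) : α.act 1 g = 1 := by
  have h2 : α.act 1 g = α.act 1 g * α.act 1 g := by
    simpa using (α.act_mul 1 1 g).symm
  simpa using h2

theorem RightAutAction.act_inv {S G : Type*} [Group S] [Group G]
    (α : RightAutAction S G) (φ : S) (g : G) :
    α.act φ⁻¹ g = (α.act φ g)⁻¹ := by
  have h := α.act_mul φ⁻¹ φ g
  rw [inv_mul_cancel, α.act_one_left] at h
  exact eq_inv_of_mul_eq_one_left h.symm

/-- The semidirect product `G ⋉ S` determined by the right action `α`,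
with multiplication `(g, φ)(g', φ') = (g g', φ^{g'} φ')`.  (A type synonym
for `G × S` carrying this group structure.) -/
def SD (S G : Type*) [Group S] [Group G] (_α : RightAutAction S G) : Type _ := G × S

/-- The element `(g, φ)` of `G ⋉ S`. -/
def SD.mk {S G : Type*} [Group S] [Group G] {α : RightAutAction S G}
    (g : G) (φ : S) : SD S G α := (g, φ)

instance SD.instGroup {S G : Type*} [Group S] [Group G] (α : RightAutAction S G) :
    Group (SD S G α) where
  mul x y := SD.mk (Prod.fst (x : G × S) * Prod.fst (y : G × S))
    (α.act (Prod.snd (x : G × S)) (Prod.fst (y : G × S)) * Prod.snd (y : G × S))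
  one := SD.mk 1 1
  inv x := SD.mk (Prod.fst (x : G × S))⁻¹
    (α.act (Prod.snd (x : G × S)) (Prod.fst (x : G × S))⁻¹)⁻¹
  mul_assoc := by
    rintro ⟨g1, s1⟩ ⟨g2, s2⟩ ⟨g3, s3⟩
    refine Prod.ext ?_ ?_
    · show (g1 * g2) * g3 = g1 * (g2 * g3)
      exact mul_assoc ..
    · show α.act (α.act s1 g2 * s2) g3 * s3 =
        α.act s1 (g2 * g3) * (α.act s2 g3 * s3)
      simp [α.act_mul, α.act_act, mul_assoc]
  one_mul := by
    rintro ⟨g, s⟩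
    show SD.mk _ _ = (⟨g, s⟩ : G × S)
    show ((1 : G) * g, α.act (1 : S) g * s) = (g, s)
    simp [SD.mk, RightAutAction.act_one_left]
  mul_one := by
    rintro ⟨g, s⟩
    show SD.mk _ _ = (⟨g, s⟩ : G × S)
    show (g * (1 : G), α.act s (1 : G) * (1 : S)) = (g, s)
    simp [SD.mk, α.act_one]
  inv_mul_cancel := by
    rintro ⟨g, s⟩
    show SD.mk _ _ = SD.mk 1 1
    simp [SD.mk, α.act_inv, α.act_act, α.act_one]
    rfl

/-!
STATEMENT 2.  In the setting of the base extension of groups, the composite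
`S → G ⋉ S → Γ = (G ⋉ S)/Ξ` of the inclusion `φ ↦ (1, φ)` with the quotient
map induces a bijection between the set `F\S` of right cosets of `F` in `S`
and the set `G\Γ` of right cosets of (the image of) `G` in `Γ`.
-/
section Aux
variable {S G : Type*} [Group S] [Group G] {α : RightAutAction S G}

theorem SD.mul_def (g g' : G) (φ φ' : S) :
    (SD.mk g φ : SD S G α) * SD.mk g' φ' = SD.mk (g * g') (α.act φ g' * φ') := rfl

theorem SD.inv_def (g : G) (φ : S) :
    (SD.mk g φ : SD S G α)⁻¹ = SD.mk g⁻¹ (α.act φ g⁻¹)⁻¹ := rfl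

theorem SD.mk_eq_iff (g g' : G) (φ φ' : S) :
    (SD.mk g φ : SD S G α) = SD.mk g' φ' ↔ g = g' ∧ φ = φ' := Prod.ext_iff

end Aux
theorem right_cosets_bijection
    (S G : Type*) [Group S] [Group G] (α : RightAutAction S G)
    (F : Subgroup S) (i : F →* G)
    (hA2 : ∀ (f : F) (φ : S), α.act φ (i f) = (f : S)⁻¹ * φ * (f : S))
    (hA3 : ∀ (f : F) (g : G), α.act (f : S) g ∈ F)
    (hA3' : ∀ (f : F) (g : G), i ⟨α.act (f : S) g, hA3 f g⟩ = g⁻¹ * i f * g)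
    (Ξ : Subgroup (SD S G α))
    (hΞ : (Ξ : Set (SD S G α)) =
      {p : SD S G α | ∃ f : F, p = SD.mk (i f) (f : S)⁻¹})
    [Ξ.Normal]
    -- `GΓ` is the image of `G` in `Γ`, regarded as a subgroup of `Γ`
    (GΓ : Subgroup (SD S G α ⧸ Ξ))
    (hGΓ : ∀ x : SD S G α ⧸ Ξ,
      x ∈ GΓ ↔ ∃ g : G, x = QuotientGroup.mk (SD.mk g 1)) :
    ∃ b : Quotient (QuotientGroup.rightRel F) ≃
        Quotient (QuotientGroup.rightRel GΓ),
      ∀ φ : S, b (Quotient.mk (QuotientGroup.rightRel F) φ) =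
        Quotient.mk (QuotientGroup.rightRel GΓ)
          (QuotientGroup.mk (SD.mk 1 φ)) := by
  classical
  have act1 : ∀ φ : S, α.act φ 1 = φ := α.act_one
  set j : S → SD S G α ⧸ Ξ := fun φ => QuotientGroup.mk (SD.mk 1 φ) with hj
  -- key: [(1, f)] = [(i f, 1)] in Γ for f ∈ F
  have key : ∀ f : F, (QuotientGroup.mk (SD.mk 1 (f : S)) : SD S G α ⧸ Ξ)
      = QuotientGroup.mk (SD.mk (i f) 1) := by
    intro f
    rw [QuotientGroup.eq]
    have : (SD.mk 1 (f : S) : SD S G α)⁻¹ * SD.mk (i f) 1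
        = SD.mk (i f) ((f : S)⁻¹) := by
      rw [SD.inv_def, SD.mul_def]
      simp only [inv_one, act1, one_mul, mul_one]
      rw [hA2]
      simp [mul_assoc]
    rw [this]
    have hmem : (SD.mk (i f) ((f : S)⁻¹) : SD S G α) ∈ (Ξ : Set (SD S G α)) := by
      rw [hΞ]; exact ⟨f, rfl⟩
    exact hmem
  have jmul : ∀ φ ψ : S, (SD.mk 1 φ : SD S G α) * (SD.mk 1 ψ)⁻¹ = SD.mk 1 (φ * ψ⁻¹) := by
    intro φ ψ
    rw [SD.inv_def, SD.mul_def]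
    simp [act1]
  have jq : ∀ φ ψ : S, j φ * (j ψ)⁻¹ = QuotientGroup.mk (SD.mk 1 (φ * ψ⁻¹)) := by
    intro φ ψ
    simp only [hj]
    rw [← QuotientGroup.mk_inv, ← QuotientGroup.mk_mul, jmul]
  have wd : ∀ φ ψ : S, (QuotientGroup.rightRel F).r φ ψ →
      Quotient.mk (QuotientGroup.rightRel GΓ) (j φ)
        = Quotient.mk (QuotientGroup.rightRel GΓ) (j ψ) := by
    intro φ ψ h
    rw [QuotientGroup.rightRel_apply] at h
    apply Quotient.sound
    have hmem : j ψ * (j φ)⁻¹ ∈ GΓ := by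
      rw [jq, hGΓ]
      exact ⟨i ⟨ψ * φ⁻¹, h⟩, key ⟨ψ * φ⁻¹, h⟩⟩
    exact QuotientGroup.rightRel_apply.mpr hmem
  set b0 : Quotient (QuotientGroup.rightRel F) → Quotient (QuotientGroup.rightRel GΓ) :=
    Quotient.lift (fun φ => Quotient.mk (QuotientGroup.rightRel GΓ) (j φ)) wd with hb0
  have hinj : Function.Injective b0 := by
    intro x y
    induction x using Quotient.ind with | _ φ => ?_
    induction y using Quotient.ind with | _ ψ => ?_
    intro h
    rw [hb0] at h
    simp only [Quotient.lift_mk] at h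
    have h' : j ψ * (j φ)⁻¹ ∈ GΓ := QuotientGroup.rightRel_apply.mp (Quotient.exact h)
    rw [jq, hGΓ] at h'
    obtain ⟨g, hg⟩ := h'
    rw [QuotientGroup.eq] at hg
    have hmem : ((SD.mk 1 (ψ * φ⁻¹) : SD S G α)⁻¹ * SD.mk g 1) ∈ (Ξ : Set (SD S G α)) := hg
    rw [hΞ] at hmem
    obtain ⟨f, hf⟩ := hmem
    have hcalc : (SD.mk 1 (ψ * φ⁻¹) : SD S G α)⁻¹ * SD.mk g 1
        = SD.mk g (α.act (φ * ψ⁻¹) g) := by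
      rw [SD.inv_def, SD.mul_def]
      simp [act1, mul_inv_rev]
    rw [hcalc, SD.mk_eq_iff] at hf
    obtain ⟨hg1, hg2⟩ := hf
    subst hg1
    have hh := hA2 f (φ * ψ⁻¹)
    rw [hg2] at hh
    -- hh : (f:S)⁻¹ = f⁻¹ (φψ⁻¹) f
    have hφψ : φ * ψ⁻¹ = (f : S)⁻¹ := by
      rw [mul_assoc] at hh
      exact eq_inv_of_mul_eq_one_left (left_eq_mul.mp hh)
    have hψφ : ψ * φ⁻¹ = (f : S) := by
      have := congrArg (fun x => x⁻¹) hφψ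
      simpa [mul_inv_rev] using this
    apply Quotient.sound
    exact QuotientGroup.rightRel_apply.mpr (by rw [hψφ]; exact f.2)
  have hsurj : Function.Surjective b0 := by
    intro y
    induction y using Quotient.ind with | _ γ => ?_
    induction γ using QuotientGroup.induction_on with | _ p => ?_
    obtain ⟨g, φ⟩ := p
    refine ⟨Quotient.mk (QuotientGroup.rightRel F) φ, ?_⟩
    rw [hb0]
    simp only [Quotient.lift_mk]
    apply Quotient.sound
    have hmem : (QuotientGroup.mk (SD.mk g φ) : SD S G α ⧸ Ξ) * (j φ)⁻¹ ∈ GΓ := by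
      have heq : (QuotientGroup.mk (SD.mk g φ) : SD S G α ⧸ Ξ) * (j φ)⁻¹
          = QuotientGroup.mk (SD.mk g 1) := by
        simp only [hj]
        rw [← QuotientGroup.mk_inv, ← QuotientGroup.mk_mul]
        congr 1
        rw [SD.inv_def, SD.mul_def]
        simp [act1]
      rw [heq, hGΓ]
      exact ⟨g, rfl⟩
    exact QuotientGroup.rightRel_apply.mpr hmem
  exact ⟨Equiv.ofBijective b0 ⟨hinj, hsurj⟩, fun φ => rfl⟩
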